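/- Let Λ be an integral lattice of determinant 1, and let M, N ⊆ Λ be sublattices with M = Λ ∩ N^⊥ and N = Λ ∩ M^⊥ (orthogonal complements taken in Λ ⊗ R). Then the determinant groups M^♯/M and N^♯/N are isomorphic; in particular det M = det N. -/

import Mathlib

open Matrix

/-- The dual lattice `M^♯ = {x ∈ M ⊗ ℝ : ⟪x, m⟫ ∈ ℤ for all m ∈ M}` of a `ℤ`-submodule
`M` of Euclidean space, viewed inside the real span of `M`. -/
noncomputable def dualLattice {d : ℕ} (M : Submodule ℤ (EuclideanSpace ℝ (Fin d))) :
    Submodule ℤ (EuclideanSpace ℝ (Fin d)) where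
  carrier := {x | x ∈ Submodule.span ℝ (M : Set (EuclideanSpace ℝ (Fin d))) ∧
    ∀ m ∈ M, ∃ k : ℤ, (inner ℝ x m : ℝ) = k}
  zero_mem' := ⟨Submodule.zero_mem _, fun m _ => ⟨0, by simp⟩⟩
  add_mem' := by
    rintro a b ⟨ha1, ha2⟩ ⟨hb1, hb2⟩
    refine ⟨Submodule.add_mem _ ha1 hb1, fun m hm => ?_⟩
    obtain ⟨k1, h1⟩ := ha2 m hm
    obtain ⟨k2, h2⟩ := hb2 m hm
    exact ⟨k1 + k2, by rw [inner_add_left, h1, h2]; push_cast; ring⟩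
  smul_mem' := by
    rintro c x ⟨hx1, hx2⟩
    refine ⟨Submodule.smul_of_tower_mem _ c hx1, fun m hm => ?_⟩
    obtain ⟨k, hk⟩ := hx2 m hm
    refine ⟨c * k, ?_⟩
    have hcx : c • x = (c : ℝ) • x := by
      exact (Int.cast_smul_eq_zsmul ℝ c x).symm
    rw [hcx, real_inner_smul_left, hk]
    push_cast; ring

namespace Stmt10Aux

open Matrix Set Submodule

variable {d : ℕ}

local notation "E" => EuclideanSpace ℝ (Fin d)

/-- Rearranging a double sum of scalar multiples. -/
lemma sum_smul_sum {R V : Type*} [CommRing R] [AddCommGroup V] [Module R V]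
    {s k : ℕ} (r : Fin s → R) (A : Fin s → Fin k → R) (w : Fin k → V) :
    ∑ i, r i • ∑ j, A i j • w j = ∑ j, (∑ i, r i * A i j) • w j := by
  simp_rw [Finset.smul_sum, smul_smul, Finset.sum_smul]
  rw [Finset.sum_comm]

/-- Clearing denominators of a rational vector. -/
lemma exists_int_vec {s : ℕ} (c : Fin s → ℚ) (hc : c ≠ 0) :
    ∃ c' : Fin s → ℤ, c' ≠ 0 ∧ ∃ D : ℚ, D ≠ 0 ∧ ∀ i, (c' i : ℚ) = D * c i := by
  classical
  set D : ℤ := ∏ i, ((c i).den : ℤ) with hD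
  have hDpos : 0 < D := Finset.prod_pos fun i _ => by exact_mod_cast (c i).pos
  have hdvd : ∀ i : Fin s, ((c i).den : ℤ) ∣ D :=
    fun i => Finset.dvd_prod_of_mem _ (Finset.mem_univ i)
  refine ⟨fun i => (c i).num * (D / (c i).den), ?_, (D : ℚ), by exact_mod_cast hDpos.ne', ?_⟩
  · obtain ⟨i, hi⟩ := Function.ne_iff.mp hc
    refine Function.ne_iff.mpr ⟨i, ?_⟩
    have h1 : (c i).num ≠ 0 := Rat.num_ne_zero.mpr hi
    have h2 : D / (c i).den ≠ 0 := by
      intro h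
      have := Int.ediv_mul_cancel (hdvd i)
      rw [h, zero_mul] at this
      exact hDpos.ne' this.symm
    exact mul_ne_zero h1 h2
  · intro i
    have h3 : ((c i).den : ℤ) * (D / (c i).den) = D := Int.mul_ediv_cancel' (hdvd i)
    have h4 : (c i) * (c i).den = (c i).num := Rat.mul_den_eq_num (c i)
    push_cast
    calc ((c i).num : ℚ) * ((D / (c i).den : ℤ) : ℚ)
        = (c i * (c i).den) * ((D / (c i).den : ℤ) : ℚ) := by rw [h4]
      _ = c i * ((((c i).den : ℤ) * (D / (c i).den) : ℤ) : ℚ) := by push_cast; ring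
      _ = (D : ℚ) * c i := by rw [h3]; ring


/-- Gram-type kernel argument. -/
lemma vecMul_eq_zero_of_gram {K : Type*} [CommRing K] [LinearOrder K] [IsStrictOrderedRing K] {s k : ℕ}
    (A : Matrix (Fin s) (Fin k) K) (c : Fin s → K) (h : c ᵥ* (A * A.transpose) = 0) :
    c ᵥ* A = 0 := by
  have h2 : (c ᵥ* A) ᵥ* A.transpose = 0 := by rw [Matrix.vecMul_vecMul]; exact h
  have expand : ∀ v : Fin k → K, (c ᵥ* A) ⬝ᵥ v = ∑ i, c i * (∑ j, A i j * v j) := by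
    intro v
    simp only [dotProduct, Matrix.vecMul, Finset.sum_mul, Finset.mul_sum]
    rw [Finset.sum_comm]
    exact Finset.sum_congr rfl fun i _ => Finset.sum_congr rfl fun j _ => by ring
  have key : (c ᵥ* A) ⬝ᵥ (c ᵥ* A) = ∑ i, c i * (((c ᵥ* A) ᵥ* A.transpose) i) := by
    rw [expand]
    refine Finset.sum_congr rfl fun i _ => ?_
    congr 1
    simp only [Matrix.vecMul, dotProduct, Matrix.transpose_apply]
    exact Finset.sum_congr rfl fun j _ => by ring
  rw [h2] at key
  simp only [Pi.zero_apply, mul_zero, Finset.sum_const_zero] at key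
  exact dotProduct_self_eq_zero.mp key


lemma li_real_of_li_int {k s : ℕ} (w : Fin k → E) (hw : LinearIndependent ℝ w)
    (A : Fin s → Fin k → ℤ)
    (hA : LinearIndependent ℤ (fun i => ∑ j, (A i j : ℝ) • w j)) :
    LinearIndependent ℝ (fun i => ∑ j, (A i j : ℝ) • w j) := by
  classical
  set Az : Matrix (Fin s) (Fin k) ℤ := Matrix.of A with hAzdef
  set B : Matrix (Fin s) (Fin s) ℤ := Az * Az.transpose with hBdef
  have hwli := Fintype.linearIndependent_iff.mp hw
  -- the Gram determinant of the rows of `A` is nonzero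
  have hdetB : B.det ≠ 0 := by
    intro h0
    set Aq : Matrix (Fin s) (Fin k) ℚ := Az.map ⇑(Int.castRingHom ℚ) with hAqdef
    have hdetQ : (Aq * Aq.transpose).det = 0 := by
      have : Aq * Aq.transpose = B.map ⇑(Int.castRingHom ℚ) := by
        rw [hBdef, Matrix.map_mul (f := Int.castRingHom ℚ)]
        rw [Matrix.transpose_map]
      rw [this, ← RingHom.mapMatrix_apply, ← RingHom.map_det, h0]
      simp
    obtain ⟨c, hc0, hcB⟩ := Matrix.exists_vecMul_eq_zero_iff.mpr hdetQ
    have hcA : c ᵥ* Aq = 0 := vecMul_eq_zero_of_gram Aq c hcB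
    obtain ⟨c', hc'0, D, hD0, hDc⟩ := exists_int_vec c hc0
    -- c' ᵥ* Az = 0 over ℤ
    have hc'A : ∀ j, ∑ i, c' i * A i j = 0 := by
      intro j
      have : ((∑ i, c' i * A i j : ℤ) : ℚ) = D * ((c ᵥ* Aq) j) := by
        push_cast
        simp only [Matrix.vecMul, dotProduct, Finset.mul_sum]
        refine Finset.sum_congr rfl fun i _ => ?_
        rw [hDc i]
        simp [hAqdef, hAzdef]
        ring
      rw [hcA] at this
      simp at this
      exact_mod_cast this
    -- contradiction with ℤ-linear independence
    have := Fintype.linearIndependent_iff.mp hA c' ?_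
    · exact hc'0 (funext this)
    · have : ∀ i : Fin s, c' i • (∑ j, (A i j : ℝ) • w j) =
          ∑ j, ((c' i * A i j : ℤ) : ℝ) • w j := by
        intro i
        rw [Finset.smul_sum]
        refine Finset.sum_congr rfl fun j _ => ?_
        rw [← Int.cast_smul_eq_zsmul ℝ (c' i), smul_smul, ← Int.cast_mul]
      rw [Finset.sum_congr rfl fun i _ => this i]
      rw [Finset.sum_comm]
      refine Finset.sum_eq_zero fun j _ => ?_
      rw [← Finset.sum_smul]
      have : ∑ i, ((c' i * A i j : ℤ) : ℝ) = ((∑ i, c' i * A i j : ℤ) : ℝ) := by push_cast; ring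
      rw [this, hc'A j]
      simp
  -- now conclude ℝ-linear independence
  refine Fintype.linearIndependent_iff.mpr fun r hr => ?_
  set Ar : Matrix (Fin s) (Fin k) ℝ := Az.map ⇑(Int.castRingHom ℝ) with hArdef
  have hrA : r ᵥ* Ar = 0 := by
    have hsum : ∑ j, (∑ i, r i * (A i j : ℝ)) • w j = 0 := by
      rw [← sum_smul_sum r (fun i j => (A i j : ℝ)) w]
      exact hr
    funext j
    have := hwli _ hsum j
    simpa [hArdef, hAzdef, Matrix.vecMul, dotProduct] using this
  have hrGram : r ᵥ* (Ar * Ar.transpose) = 0 := by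
    rw [← Matrix.vecMul_vecMul, hrA, Matrix.zero_vecMul]
  have hdetR : (Ar * Ar.transpose).det ≠ 0 := by
    have : Ar * Ar.transpose = B.map ⇑(Int.castRingHom ℝ) := by
      rw [hBdef, Matrix.map_mul (f := Int.castRingHom ℝ), Matrix.transpose_map]
    rw [this, ← RingHom.mapMatrix_apply, ← RingHom.map_det]
    simpa using hdetB
  have hr0 : r = 0 := by
    by_contra h
    exact hdetR (Matrix.exists_vecMul_eq_zero_iff.mp ⟨r, h, hrGram⟩)
  intro i
  rw [hr0]
  rfl

/-- A `ℤ`-submodule of the `ℤ`-span of an `ℝ`-independent family has a `ℤ`-basis that is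
`ℝ`-independent. -/
lemma exists_zbasis {k : ℕ} (w : Fin k → E) (hw : LinearIndependent ℝ w)
    (L : Submodule ℤ (EuclideanSpace ℝ (Fin d))) (hL : L ≤ span ℤ (range w)) :
    ∃ (s : ℕ) (u : Fin s → E), LinearIndependent ℝ u ∧ span ℤ (range u) = L := by
  classical
  have hwz : LinearIndependent ℤ w :=
    hw.restrict_scalars (by intro a b hab; simpa using hab)
  let wb : Module.Basis (Fin k) ℤ ↥(span ℤ (range w)) := Module.Basis.span hwz
  obtain ⟨s, ub⟩ := Submodule.basisOfPid wb (L.comap (span ℤ (range w)).subtype)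
  let f : ↥(L.comap (span ℤ (range w)).subtype) →ₗ[ℤ] EuclideanSpace ℝ (Fin d) :=
    (span ℤ (range w)).subtype.comp (L.comap (span ℤ (range w)).subtype).subtype
  have hfinj : Function.Injective f :=
    (span ℤ (range w)).injective_subtype.comp (Submodule.injective_subtype _)
  set u : Fin s → E := fun i => f (ub i) with hu
  have hspan : span ℤ (range u) = L := by
    have h1 : range u = ⇑f '' (range ⇑ub) := by rw [hu]; exact Set.range_comp _ _
    rw [h1, ← Submodule.map_span, ub.span_eq, Submodule.map_top, LinearMap.range_comp,
      Submodule.range_subtype, Submodule.map_comap_subtype]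
    exact inf_eq_right.mpr hL
  have huzli : LinearIndependent ℤ u := ub.linearIndependent.map' f (LinearMap.ker_eq_bot.mpr hfinj)
  -- write each `u i` in integer coordinates w.r.t. `w`
  have hmem : ∀ i, u i ∈ span ℤ (range w) := fun i => ((ub i : _) : ↥(span ℤ (range w))).2
  have hcoef : ∀ i, ∃ c : Fin k → ℤ, ∑ j, c j • w j = u i :=
    fun i => (mem_span_range_iff_exists_fun ℤ).mp (hmem i)
  choose A hA using hcoef
  have hueq : u = fun i => ∑ j, (A i j : ℝ) • w j := by
    funext i
    rw [← hA i]
    exact Finset.sum_congr rfl fun j _ => (Int.cast_smul_eq_zsmul ℝ _ _).symm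
  refine ⟨s, u, ?_, hspan⟩
  rw [hueq]
  exact li_real_of_li_int w hw A (by rw [← hueq]; exact huzli)

/-- Dual family of an `ℝ`-independent family. -/
lemma exists_dual {n : ℕ} (u : Fin n → E) (hu : LinearIndependent ℝ u) :
    ∃ w : Fin n → E, (∀ i, w i ∈ span ℝ (range u)) ∧
      (∀ i j, (inner ℝ (w i) (u j) : ℝ) = if i = j then 1 else 0) ∧
      LinearIndependent ℝ w ∧ span ℝ (range w) = span ℝ (range u) := by
  classical
  set G : Matrix (Fin n) (Fin n) ℝ := Matrix.of fun i j => (inner ℝ (u i) (u j) : ℝ) with hG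
  have hinner_sum : ∀ (c : Fin n → ℝ) (j : Fin n),
      (inner ℝ (∑ i, c i • u i) (u j) : ℝ) = ∑ i, c i * G i j := by
    intro c j
    rw [sum_inner]
    exact Finset.sum_congr rfl fun i _ => real_inner_smul_left _ _ _
  have hdetG : G.det ≠ 0 := by
    intro h0
    obtain ⟨c, hc0, hcG⟩ := Matrix.exists_vecMul_eq_zero_iff.mpr h0
    have hS : ∑ i, c i • u i = 0 := by
      have h1 : ∀ j, (inner ℝ (∑ i, c i • u i) (u j) : ℝ) = 0 := by
        intro j
        rw [hinner_sum]
        have := congrFun hcG j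
        simpa [Matrix.vecMul, dotProduct] using this
      have h2 : (inner ℝ (∑ j, c j • u j) (∑ j, c j • u j) : ℝ) = 0 := by
        rw [inner_sum]
        refine Finset.sum_eq_zero fun j _ => ?_
        rw [real_inner_smul_right, h1 j, mul_zero]
      exact inner_self_eq_zero.mp h2
    exact hc0 (funext (Fintype.linearIndependent_iff.mp hu c hS))
  have hGinv : G⁻¹ * G = 1 := Matrix.nonsing_inv_mul G (isUnit_iff_ne_zero.mpr hdetG)
  set w : Fin n → E := fun i => ∑ j, G⁻¹ i j • u j with hw
  have hpair : ∀ i j, (inner ℝ (w i) (u j) : ℝ) = if i = j then 1 else 0 := by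
    intro i j
    rw [hw]
    simp only
    rw [hinner_sum]
    have : ∑ l, G⁻¹ i l * G l j = (G⁻¹ * G) i j := by
      simp [Matrix.mul_apply]
    rw [this, hGinv, Matrix.one_apply]
  have hwmem : ∀ i, w i ∈ span ℝ (range u) := by
    intro i
    exact Submodule.sum_mem _ fun j _ =>
      Submodule.smul_mem _ _ (Submodule.subset_span (mem_range_self j))
  have hwli : LinearIndependent ℝ w := by
    refine Fintype.linearIndependent_iff.mpr fun c hc => fun j => ?_
    have : (inner ℝ (∑ i, c i • w i) (u j) : ℝ) = c j := by
      rw [sum_inner]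
      have : ∀ i, (inner ℝ (c i • w i) (u j) : ℝ) = c i * (if i = j then 1 else 0) := by
        intro i
        rw [real_inner_smul_left, hpair]
      rw [Finset.sum_congr rfl fun i _ => this i]
      simp
    rw [hc] at this
    simpa using this.symm
  refine ⟨w, hwmem, hpair, hwli, ?_⟩
  have hle : span ℝ (range w) ≤ span ℝ (range u) :=
    span_le.mpr (range_subset_iff.mpr hwmem)
  refine Submodule.eq_of_le_of_finrank_le hle ?_
  rw [finrank_span_eq_card hu, finrank_span_eq_card hwli]


/-- If `x` lies in the real span of `w`, the family `u` pairs with `w` as a dual family,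
and `x` has integer pairings against `u`, then `x` lies in the `ℤ`-span of `w`. -/
lemma mem_zspan_of_int_pairs {n : ℕ} (w u : Fin n → E)
    (hp : ∀ i j, (inner ℝ (w i) (u j) : ℝ) = if i = j then 1 else 0)
    (x : EuclideanSpace ℝ (Fin d)) (hx : x ∈ span ℝ (range w))
    (hk : ∀ j, ∃ k : ℤ, (inner ℝ x (u j) : ℝ) = k) :
    x ∈ span ℤ (range w) := by
  obtain ⟨c, hc⟩ := (mem_span_range_iff_exists_fun ℝ).mp hx
  choose k hkk using hk
  have hcj : ∀ j, c j = (k j : ℝ) := by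
    intro j
    rw [← hkk j, ← hc, sum_inner]
    rw [Finset.sum_congr rfl fun i (_ : i ∈ Finset.univ) =>
      (by rw [real_inner_smul_left, hp] : (inner ℝ (c i • w i) (u j) : ℝ)
        = c i * (if i = j then 1 else 0))]
    simp
  have : x = ∑ j, k j • w j := by
    rw [← hc]
    exact Finset.sum_congr rfl fun j _ => by rw [hcj j, Int.cast_smul_eq_zsmul]
  rw [this]
  exact Submodule.sum_mem _ fun j _ =>
    Submodule.smul_mem _ _ (Submodule.subset_span (mem_range_self j))

/-- A determinant-one integral lattice is self-dual: any vector pairing integrally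
with the basis lies in the lattice. -/
lemma mem_lattice_of_int_pairs (Λ : Submodule ℤ (EuclideanSpace ℝ (Fin d)))
    (b : Module.Basis (Fin d) ℝ (EuclideanSpace ℝ (Fin d)))
    (hΛ : Λ = Submodule.span ℤ (Set.range b))
    (hdet : (Matrix.of fun i j : Fin d => (inner ℝ (b i) (b j) : ℝ)).det = 1)
    (hint : ∀ x ∈ Λ, ∀ y ∈ Λ, ∃ k : ℤ, (inner ℝ x y : ℝ) = k)
    (x : EuclideanSpace ℝ (Fin d)) (hx : ∀ i, ∃ k : ℤ, (inner ℝ x (b i) : ℝ) = k) :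
    x ∈ Λ := by
  classical
  have hb : ∀ i, b i ∈ Λ := fun i => hΛ ▸ Submodule.subset_span (mem_range_self i)
  have hG : ∀ i j, ∃ k : ℤ, (inner ℝ (b i) (b j) : ℝ) = k := fun i j => hint _ (hb i) _ (hb j)
  choose Gz hGz using hG
  choose y hy using hx
  set Gm : Matrix (Fin d) (Fin d) ℤ := Matrix.of Gz with hGm
  have hcast : Gm.map ⇑(Int.castRingHom ℝ) = Matrix.of fun i j => (inner ℝ (b i) (b j) : ℝ) := by
    ext i j
    simp [hGm, hGz]
  have hdetGm : Gm.det = 1 := by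
    have h1 : ((Gm.det : ℤ) : ℝ) = 1 := by
      rw [show ((Gm.det : ℤ) : ℝ) = (Int.castRingHom ℝ) Gm.det from rfl,
        RingHom.map_det, RingHom.mapMatrix_apply, hcast, hdet]
    exact_mod_cast h1
  set c : Fin d → ℝ := fun i => b.repr x i with hcdef
  have hsum : ∑ i, c i • b i = x := b.sum_repr x
  have hrel : ∀ j, ∑ i, c i * (Gz i j : ℝ) = (y j : ℝ) := by
    intro j
    rw [← hy j, ← hsum, sum_inner]
    exact Finset.sum_congr rfl fun i _ => by rw [real_inner_smul_left, hGz]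
  -- invert over ℤ
  have hunit : IsUnit Gm.det := by rw [hdetGm]; exact isUnit_one
  set cz : Fin d → ℤ := y ᵥ* Gm⁻¹ with hcz
  have h1 : cz ᵥ* Gm = y := by
    rw [hcz, Matrix.vecMul_vecMul, Matrix.nonsing_inv_mul Gm hunit, Matrix.vecMul_one]
  have h2 : ∀ j, ∑ i, (cz i : ℝ) * (Gz i j : ℝ) = (y j : ℝ) := by
    intro j
    have := congrFun h1 j
    simp only [Matrix.vecMul, dotProduct, hGm, Matrix.of_apply] at this
    exact_mod_cast this
  -- injectivity of pairing with the (real) Gram matrix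
  set Gr : Matrix (Fin d) (Fin d) ℝ := Gm.map ⇑(Int.castRingHom ℝ) with hGr
  have hdetGr : Gr.det ≠ 0 := by
    rw [hGr, ← RingHom.mapMatrix_apply, ← RingHom.map_det, hdetGm]
    norm_num
  have hceq : ∀ i, c i = (cz i : ℝ) := by
    have hv : (fun i => c i - (cz i : ℝ)) ᵥ* Gr = 0 := by
      funext j
      simp only [Matrix.vecMul, dotProduct, hGr, Matrix.map_apply, hGm, Matrix.of_apply,
        Int.coe_castRingHom, Pi.zero_apply]
      rw [Finset.sum_congr rfl fun i (_ : i ∈ Finset.univ) => sub_mul (c i) ((cz i : ℝ)) _,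
        Finset.sum_sub_distrib]
      rw [hrel j, h2 j, sub_self]
    have hz : (fun i => c i - (cz i : ℝ)) = 0 := by
      have := congrArg (fun v => v ᵥ* Gr⁻¹) hv
      simpa [Matrix.vecMul_vecMul,
        Matrix.mul_nonsing_inv Gr (isUnit_iff_ne_zero.mpr hdetGr)] using this
    intro i
    have := congrFun hz i
    simpa [sub_eq_zero] using this
  have : x = ∑ i, cz i • b i := by
    rw [← hsum]
    exact Finset.sum_congr rfl fun i _ => by rw [hceq i, Int.cast_smul_eq_zsmul]
  rw [this, hΛ]
  exact Submodule.sum_mem _ fun i _ =>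
    Submodule.smul_mem _ _ (Submodule.subset_span (mem_range_self i))


lemma side (Λ M N : Submodule ℤ (EuclideanSpace ℝ (Fin d)))
    (b : Module.Basis (Fin d) ℝ (EuclideanSpace ℝ (Fin d)))
    (hΛ : Λ = Submodule.span ℤ (Set.range b))
    (hdet : (Matrix.of fun i j : Fin d => (inner ℝ (b i) (b j) : ℝ)).det = 1)
    (hint : ∀ x ∈ Λ, ∀ y ∈ Λ, ∃ k : ℤ, (inner ℝ x y : ℝ) = k)
    (hM : ∀ x, x ∈ M ↔ x ∈ Λ ∧ ∀ y ∈ N, (inner ℝ x y : ℝ) = 0)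
    (hN : ∀ x, x ∈ N ↔ x ∈ Λ ∧ ∀ y ∈ M, (inner ℝ x y : ℝ) = 0) :
    Nonempty ((↥(dualLattice M) ⧸ Submodule.comap (dualLattice M).subtype M) ≃ₗ[ℤ]
      (↥Λ ⧸ Submodule.comap Λ.subtype (M ⊔ N))) := by
  classical
  set V : Submodule ℝ (EuclideanSpace ℝ (Fin d)) := span ℝ (M : Set (EuclideanSpace ℝ (Fin d)))
    with hV
  have hb : ∀ i, b i ∈ Λ := fun i => hΛ ▸ Submodule.subset_span (mem_range_self i)
  have hMΛ : M ≤ Λ := fun x hx => ((hM x).mp hx).1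
  have hMN : ∀ m ∈ M, ∀ nn ∈ N, (inner ℝ m nn : ℝ) = 0 := fun m hm nn hn => ((hM m).mp hm).2 nn hn
  have hVN : ∀ x ∈ V, ∀ nn ∈ N, (inner ℝ x nn : ℝ) = 0 := by
    intro x hx nn hn
    refine Submodule.span_induction (fun m hm => hMN m hm nn hn) (by simp)
      (fun a b _ _ ha hb => by rw [inner_add_left, ha, hb, add_zero])
      (fun c a _ ha => by rw [real_inner_smul_left, ha, mul_zero]) hx
  have hMV : ∀ m ∈ M, m ∈ V := fun m hm => Submodule.subset_span hm
  -- the orthogonal projection onto V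
  set pr : EuclideanSpace ℝ (Fin d) →ₗ[ℝ] EuclideanSpace ℝ (Fin d) :=
    V.subtype.comp (orthogonalProjection V).toLinearMap with hpr
  have hprV : ∀ x, pr x ∈ V := fun x => (orthogonalProjection V x).2
  have hprinner : ∀ x y, y ∈ V → (inner ℝ (pr x) y : ℝ) = inner ℝ x y := by
    intro x y hy
    have h : (inner ℝ (x - pr x) y : ℝ) = 0 := V.starProjection_inner_eq_zero x y hy
    rw [inner_sub_left] at h
    linarith
  have hprid : ∀ x ∈ V, pr x = x := fun x hx => V.starProjection_eq_self_iff.mpr hx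
  have hprzero : ∀ x, (∀ y ∈ V, (inner ℝ y x : ℝ) = 0) → pr x = 0 := by
    intro x h
    have hx : x ∈ Vᗮ := (Submodule.mem_orthogonal V x).mpr h
    show (↑(orthogonalProjection V x) : EuclideanSpace ℝ (Fin d)) = 0
    rw [Submodule.orthogonalProjectionOnto_apply_of_mem_orthogonal hx]
    rfl
  have hprΛint : ∀ x ∈ Λ, ∀ m ∈ M, ∃ k : ℤ, (inner ℝ (pr x) m : ℝ) = k := by
    intro x hx m hm
    rw [hprinner x m (hMV m hm)]
    exact hint x hx m (hMΛ hm)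
  -- a ℤ-basis of M
  obtain ⟨n, v, hvli, hvspan⟩ := exists_zbasis ⇑b b.linearIndependent M (by rw [← hΛ]; exact hMΛ)
  have hvM : ∀ j, v j ∈ M := fun j => hvspan ▸ Submodule.subset_span (mem_range_self j)
  have hVv : V = span ℝ (range v) := by rw [hV, ← hvspan, span_span_of_tower]
  -- its dual family
  obtain ⟨w, hwmem, hwpair, hwli, hwspan⟩ := exists_dual v hvli
  -- the projected lattice
  set prz : EuclideanSpace ℝ (Fin d) →ₗ[ℤ] EuclideanSpace ℝ (Fin d) := pr.restrictScalars ℤ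
    with hprz
  set L : Submodule ℤ (EuclideanSpace ℝ (Fin d)) := Λ.map prz with hL
  have hprmem : ∀ x ∈ Λ, pr x ∈ L := fun x hx => ⟨x, hx, rfl⟩
  have hLV : ∀ x ∈ L, x ∈ V := by rintro x ⟨y, hy, rfl⟩; exact hprV y
  have hML : M ≤ L := fun m hm => ⟨m, hMΛ hm, hprid m (hMV m hm)⟩
  have hLw : L ≤ span ℤ (range w) := by
    rintro x ⟨lam, hlam, rfl⟩
    refine mem_zspan_of_int_pairs w v hwpair _ ?_ ?_
    · rw [hwspan, ← hVv]; exact hprV lam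
    · exact fun j => hprΛint lam hlam (v j) (hvM j)
  -- a ℤ-basis of L
  obtain ⟨s, u, huli, huspan⟩ := exists_zbasis w hwli L hLw
  have huL : ∀ j, u j ∈ L := fun j => huspan ▸ Submodule.subset_span (mem_range_self j)
  have hVu : span ℝ (range u) = V := by
    have h1 : span ℝ (range u) = span ℝ (L : Set (EuclideanSpace ℝ (Fin d))) := by
      rw [← huspan, span_span_of_tower]
    apply le_antisymm
    · rw [h1]; exact span_le.mpr hLV
    · rw [hV, h1]
      exact span_mono hML
  -- the dual family of u
  obtain ⟨w', hw'mem, hw'pair, hw'li, hw'span⟩ := exists_dual u huli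
  have hw'V : ∀ i, w' i ∈ V := fun i => hVu ▸ hw'mem i
  -- key pairing computation
  have hinner_zsum : ∀ (i : Fin s) (cc : Fin s → ℤ),
      (inner ℝ (w' i) (∑ j, cc j • u j) : ℝ) = cc i := by
    intro i cc
    rw [inner_sum]
    rw [Finset.sum_congr rfl fun j (_ : j ∈ Finset.univ) => (by
      rw [← Int.cast_smul_eq_zsmul ℝ, real_inner_smul_right, hw'pair] :
      (inner ℝ (w' i) (cc j • u j) : ℝ) = (cc j : ℝ) * (if i = j then 1 else 0))]
    simp
  -- M is the ℤ-span of w'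
  have hMw' : M = span ℤ (range w') := by
    apply le_antisymm
    · intro m hm
      refine mem_zspan_of_int_pairs w' u hw'pair _ ?_ ?_
      · rw [hw'span, hVu]; exact hMV m hm
      · intro j
        obtain ⟨lam, hlam, hplam⟩ := huL j
        have hplam' : pr lam = u j := hplam
        obtain ⟨k, hk⟩ := hint lam hlam m (hMΛ hm)
        refine ⟨k, ?_⟩
        rw [real_inner_comm, ← hplam', hprinner lam m (hMV m hm), hk]
    · refine span_le.mpr (range_subset_iff.mpr fun i => ?_)
      refine (hM (w' i)).mpr ⟨?_, fun nn hn => hVN (w' i) (hw'V i) nn hn⟩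
      refine mem_lattice_of_int_pairs Λ b hΛ hdet hint _ fun j => ?_
      have h2 : pr (b j) ∈ L := hprmem _ (hb j)
      rw [← huspan] at h2
      obtain ⟨cc, hcc⟩ := (mem_span_range_iff_exists_fun ℤ).mp h2
      refine ⟨cc i, ?_⟩
      have h1 : (inner ℝ (w' i) (b j) : ℝ) = inner ℝ (w' i) (pr (b j)) := by
        rw [real_inner_comm, ← hprinner (b j) (w' i) (hw'V i), real_inner_comm]
      rw [h1, ← hcc, hinner_zsum]
  -- the dual lattice of M is L
  have hDM : dualLattice M = L := by
    apply le_antisymm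
    · rintro x ⟨hx1, hx2⟩
      rw [← huspan]
      refine mem_zspan_of_int_pairs u w'
        (fun i j => by
          rw [real_inner_comm, hw'pair]
          by_cases h : i = j
          · simp [h]
          · simp [h, Ne.symm h]) _ ?_ ?_
      · rw [hVu]; exact hx1
      · intro j
        exact hx2 (w' j) (hMw' ▸ Submodule.subset_span (mem_range_self j))
    · rintro x ⟨lam, hlam, rfl⟩
      exact ⟨hprV lam, fun m hm => hprΛint lam hlam m hm⟩
  -- the quotient map
  set q : Submodule ℤ ↥(dualLattice M) := Submodule.comap (dualLattice M).subtype M with hq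
  set g : ↥Λ →ₗ[ℤ] ↥(dualLattice M) :=
    (prz.comp Λ.subtype).codRestrict (dualLattice M)
      (fun x => by rw [hDM]; exact hprmem x.1 x.2) with hg
  set F : ↥Λ →ₗ[ℤ] ↥(dualLattice M) ⧸ q := q.mkQ.comp g with hF
  have hFval : ∀ x : ↥Λ, ((g x : ↥(dualLattice M)) : EuclideanSpace ℝ (Fin d)) = pr ↑x :=
    fun x => rfl
  have hFsurj : Function.Surjective F := by
    intro z
    obtain ⟨x, rfl⟩ := Submodule.mkQ_surjective q z
    have hx : (x : EuclideanSpace ℝ (Fin d)) ∈ L := by rw [← hDM]; exact x.2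
    obtain ⟨lam, hlam, hplam⟩ := hx
    exact ⟨⟨lam, hlam⟩, congrArg q.mkQ (Subtype.ext hplam)⟩
  have hFker : LinearMap.ker F = Submodule.comap Λ.subtype (M ⊔ N) := by
    ext x
    have hmem : F x = 0 ↔ pr ↑x ∈ M := by
      rw [hF, LinearMap.comp_apply, Submodule.mkQ_apply, Submodule.Quotient.mk_eq_zero, hq,
        Submodule.mem_comap]
      exact Iff.rfl
    rw [LinearMap.mem_ker, hmem, Submodule.mem_comap]
    constructor
    · intro hpx
      have hsub : ((x : EuclideanSpace ℝ (Fin d)) - pr ↑x) ∈ N := by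
        refine (hN _).mpr ⟨Submodule.sub_mem Λ x.2 (hMΛ hpx), fun y hy => ?_⟩
        rw [inner_sub_left, hprinner ↑x y (hMV y hy), sub_self]
      show (x : EuclideanSpace ℝ (Fin d)) ∈ M ⊔ N
      rw [Submodule.mem_sup]
      exact ⟨pr ↑x, hpx, ↑x - pr ↑x, hsub, by abel⟩
    · intro h
      have h' : (x : EuclideanSpace ℝ (Fin d)) ∈ M ⊔ N := h
      obtain ⟨m, hm, nn, hn, hmn⟩ := Submodule.mem_sup.mp h'
      have hprn : pr nn = 0 := hprzero nn (fun y hy => hVN y hy nn hn)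
      have hx2 : pr ↑x = pr m + pr nn := by rw [← hmn, map_add]
      rw [hx2, hprn, add_zero, hprid m (hMV m hm)]
      exact hm
  exact ⟨(LinearMap.quotKerEquivOfSurjective F hFsurj).symm.trans
    (Submodule.quotEquivOfEq _ _ hFker)⟩


end Stmt10Aux

theorem stmt10 (d : ℕ) (Λ M N : Submodule ℤ (EuclideanSpace ℝ (Fin d)))
    (b : Module.Basis (Fin d) ℝ (EuclideanSpace ℝ (Fin d)))
    (hΛ : Λ = Submodule.span ℤ (Set.range b))
    (hdet : (Matrix.of fun i j : Fin d => (inner ℝ (b i) (b j) : ℝ)).det = 1)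
    (hint : ∀ x ∈ Λ, ∀ y ∈ Λ, ∃ k : ℤ, (inner ℝ x y : ℝ) = k)
    (hM : ∀ x, x ∈ M ↔ x ∈ Λ ∧ ∀ y ∈ N, (inner ℝ x y : ℝ) = 0)
    (hN : ∀ x, x ∈ N ↔ x ∈ Λ ∧ ∀ y ∈ M, (inner ℝ x y : ℝ) = 0) :
    Nonempty
      ((↥(dualLattice M) ⧸ Submodule.comap (dualLattice M).subtype M) ≃ₗ[ℤ]
       (↥(dualLattice N) ⧸ Submodule.comap (dualLattice N).subtype N)) := by
  obtain ⟨e1⟩ := Stmt10Aux.side Λ M N b hΛ hdet hint hM hN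
  obtain ⟨e2⟩ := Stmt10Aux.side Λ N M b hΛ hdet hint hN hM
  have h : Submodule.comap Λ.subtype (M ⊔ N) = Submodule.comap Λ.subtype (N ⊔ M) := by
    rw [sup_comm]
  exact ⟨e1.trans ((Submodule.quotEquivOfEq _ _ h).trans e2.symm)⟩
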